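/- Let v_1 ≤ v_2 ≤ … ≤ v_n be real numbers and α ∈ [0, 1/2]. For every real x in the interval [(1−α)v_1 + α v_n, α v_1 + (1−α)v_n], there exist real numbers a_1, …, a_n, each in [α/n, 1], with a_1 + … + a_n = 1 and x = a_1 v_1 + … + a_n v_n. -/

import Mathlib

open Finset

lemma aux_convex_comb (n : ℕ) (hn : 1 ≤ n) (v : Fin n → ℝ) (α x c d : ℝ)
    (i0 i1 : Fin n) (hne : i0 ≠ i1)
    (hc : 0 ≤ c) (hd : 0 ≤ d) (hcd : c + d = 1 - α)
    (hα0 : 0 ≤ α) (hα1 : α ≤ 1/2)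
    (hval : (α / n) * ∑ i, v i + c * v i0 + d * v i1 = x) :
    ∃ a : Fin n → ℝ, (∀ i, a i ∈ Set.Icc (α / n) 1) ∧
      ∑ i, a i = 1 ∧ x = ∑ i, a i * v i := by
  have hn' : (1:ℝ) ≤ (n:ℝ) := by exact_mod_cast hn
  have hαn : α / n ≤ α := div_le_self hα0 hn'
  refine ⟨fun i => α / n + (if i = i0 then c else 0) + (if i = i1 then d else 0), ?_, ?_, ?_⟩
  · intro i
    constructor
    · have h1 : (0:ℝ) ≤ (if i = i0 then c else 0) := by positivity
      have h2 : (0:ℝ) ≤ (if i = i1 then d else 0) := by positivity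
      linarith
    · rcases eq_or_ne i i0 with rfl | h0
      · simp [hne]
        have : d ≥ 0 := hd
        linarith
      · rcases eq_or_ne i i1 with rfl | h1
        · simp [h0]
          linarith
        · simp [h0, h1]
          linarith
  · rw [Finset.sum_add_distrib, Finset.sum_add_distrib, Finset.sum_const,
      Finset.sum_ite_eq' univ i0, Finset.sum_ite_eq' univ i1]
    simp [Finset.card_univ, nsmul_eq_mul]
    have hne' : (n:ℝ) ≠ 0 := by linarith
    field_simp
    linarith
  · have : ∀ i : Fin n, (α / n + (if i = i0 then c else 0) + (if i = i1 then d else 0)) * v i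
        = (α / n) * v i + (if i = i0 then c * v i else 0) + (if i = i1 then d * v i else 0) := by
      intro i
      split_ifs <;> ring
    rw [Finset.sum_congr rfl (fun i _ => this i), Finset.sum_add_distrib,
      Finset.sum_add_distrib, Finset.sum_ite_eq' univ i0, Finset.sum_ite_eq' univ i1,
      ← Finset.mul_sum]
    simp
    linarith

theorem safe_value_as_convex_combination_with_lower_bounded_weights
    (n : ℕ) (hn : 1 ≤ n) (v : Fin n → ℝ) (hv : Monotone v)
    (α : ℝ) (hα : α ∈ Set.Icc (0 : ℝ) (1 / 2))
    (x : ℝ)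
    (hx : x ∈ Set.Icc ((1 - α) * v ⟨0, hn⟩ + α * v ⟨n - 1, Nat.sub_lt hn one_pos⟩)
                      (α * v ⟨0, hn⟩ + (1 - α) * v ⟨n - 1, Nat.sub_lt hn one_pos⟩)) :
    ∃ a : Fin n → ℝ, (∀ i, a i ∈ Set.Icc (α / n) 1) ∧
      ∑ i, a i = 1 ∧ x = ∑ i, a i * v i := by
  obtain ⟨hα0, hα1⟩ := hα
  obtain ⟨hxl, hxu⟩ := hx
  set i0 : Fin n := ⟨0, hn⟩ with hi0
  set i1 : Fin n := ⟨n - 1, Nat.sub_lt hn one_pos⟩ with hi1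
  rcases eq_or_lt_of_le hn with h1 | h2
  · -- n = 1
    have hi : i0 = i1 := by
      apply Fin.ext; simp [hi0, hi1, ← h1]
    have hx0 : x = v i0 := by
      rw [← hi] at hxl hxu
      apply le_antisymm <;> linarith
    refine ⟨fun _ => 1, fun i => ⟨?_, le_refl 1⟩, ?_, ?_⟩
    · have hn' : (1:ℝ) ≤ (n:ℝ) := by exact_mod_cast hn
      have := div_le_self hα0 hn'
      linarith
    · simp [← h1]
    · rw [hx0]
      have hall : ∀ i : Fin n, v i = v i0 := by
        intro i; congr 1; apply Fin.ext
        have := i.isLt; simp [hi0]; omega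
      simp only [one_mul]
      rw [Finset.sum_congr rfl (fun i _ => hall i)]
      simp [Finset.card_univ, ← h1]
  · -- n ≥ 2
    have hn0 : (n:ℝ) ≠ 0 := by positivity
    have hne : i0 ≠ i1 := by
      simp only [hi0, hi1, ne_eq, Fin.mk.injEq]
      omega
    have hv01 : v i0 ≤ v i1 := hv (by simp [Fin.le_def, hi0, hi1])
    have hS1 : (n:ℝ) * v i0 ≤ ∑ i, v i := by
      have := Finset.card_nsmul_le_sum Finset.univ v (v i0)
        (fun i _ => hv (show i0 ≤ i by simp [Fin.le_def, hi0]))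
      simpa [Finset.card_univ, nsmul_eq_mul] using this
    have hS2 : ∑ i, v i ≤ (n:ℝ) * v i1 := by
      have := Finset.sum_le_card_nsmul Finset.univ v (v i1)
        (fun i _ => hv (show i ≤ i1 by
          simp only [Fin.le_def, hi1]
          exact Nat.le_sub_one_of_lt i.isLt))
      simpa [Finset.card_univ, nsmul_eq_mul] using this
    rcases eq_or_lt_of_le hv01 with heq | hlt
    · have hnn : (n:ℝ) * v i0 = (n:ℝ) * v i1 := by rw [heq]
      have hαn : α * v i0 = α * v i1 := by rw [heq]
      have hSval : ∑ i, v i = (n:ℝ) * v i0 := by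
        apply le_antisymm <;> linarith
      have hx0 : x = v i0 := by
        apply le_antisymm <;> linarith
      apply aux_convex_comb n hn v α x ((1-α)/2) ((1-α)/2) i0 i1 hne
        (by linarith) (by linarith) (by ring) hα0 hα1
      have hh : α/(n:ℝ) * ∑ i, v i = α * v i0 := by rw [hSval]; field_simp
      linear_combination hh - ((1-α)/2) * heq - hx0
    · have hΔ : 0 < v i1 - v i0 := by linarith
      have hΔ' : v i1 - v i0 ≠ 0 := ne_of_gt hΔ
      set S := ∑ i, v i with hS
      have hl1 : α * v i0 ≤ (α/n) * S := by
        have h := mul_le_mul_of_nonneg_left hS1 (show 0 ≤ α/n by positivity)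
        have h2 : α/n * ((n:ℝ) * v i0) = α * v i0 := by field_simp
        linarith
      have hl2 : (α/n) * S ≤ α * v i1 := by
        have h := mul_le_mul_of_nonneg_left hS2 (show 0 ≤ α/n by positivity)
        have h2 : α/n * ((n:ℝ) * v i1) = α * v i1 := by field_simp
        linarith
      set c := ((α/n)*S + (1-α)*v i1 - x)/(v i1 - v i0) with hcdef
      set d := (x - (α/n)*S - (1-α)*v i0)/(v i1 - v i0) with hddef
      apply aux_convex_comb n hn v α x c d i0 i1 hne
      · exact div_nonneg (by linarith) (le_of_lt hΔ)
      · exact div_nonneg (by linarith) (le_of_lt hΔ)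
      · rw [hcdef, hddef]; field_simp; ring
      · exact hα0
      · exact hα1
      · rw [hcdef, hddef]; field_simp; ring
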